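/- Let y ∈ ℝⁿ with y[i] ≥ 0, H : ℝⁿ → ℝⁿ and Φ : ℝᴸ → ℝⁿ linear, γ > 0, Ψ : ℝᴸ → ℝ continuous, nonnegative and coercive, and suppose there exists α₀ with J(α₀) < +∞. Then J attains its infimum: there exists α* ∈ ℝᴸ with J(α*) < +∞ and J(α*) ≤ J(α) for all α ∈ ℝᴸ. -/

import Mathlib

/-- Scalar Poisson negative log-likelihood `f_pois(y,·) : ℝ → (-∞,+∞]`. -/
noncomputable def fpois (y t : ℝ) : EReal :=
  if 0 < y then (if 0 < t then ((-y * Real.log t + t : ℝ) : EReal) else ⊤)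
  else (if 0 ≤ t then ((t : ℝ) : EReal) else ⊤)

/-- Poisson data-fidelity term `f₁(η) = Σᵢ f_pois(y[i], η[i])`. -/
noncomputable def f1 {n : ℕ} (y : Fin n → ℝ) (η : EuclideanSpace ℝ (Fin n)) : EReal :=
  ∑ i, fpois (y i) (η i)

/-- Indicator function of a set, `0` on the set, `+∞` off it. -/
noncomputable def indC {E : Type*} (C : Set E) (w : E) : EReal :=
  open Classical in if w ∈ C then 0 else ⊤

/-- The objective `J(α) = f₁(HΦα) + γΨ(α) + ι_C(Φα)`, `C` the nonnegative orthant. -/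
noncomputable def J {n L : ℕ} (y : Fin n → ℝ)
    (H : EuclideanSpace ℝ (Fin n) →ₗ[ℝ] EuclideanSpace ℝ (Fin n))
    (Φ : EuclideanSpace ℝ (Fin L) →ₗ[ℝ] EuclideanSpace ℝ (Fin n)) (γ : ℝ)
    (Ψ : EuclideanSpace ℝ (Fin L) → ℝ) (α : EuclideanSpace ℝ (Fin L)) : EReal :=
  f1 y (H (Φ α)) + ((γ * Ψ α : ℝ) : EReal)
    + indC {x : EuclideanSpace ℝ (Fin n) | ∀ i, 0 ≤ x i} (Φ α)

section Aux

lemma my_add_ne_bot {x y : EReal} (hx : x ≠ ⊥) (hy : y ≠ ⊥) : x + y ≠ ⊥ := by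
  induction x using EReal.rec <;> induction y using EReal.rec <;>
    simp_all [EReal.top_add_of_ne_bot, EReal.add_top_of_ne_bot, ← EReal.coe_add]

lemma my_sum_ne_bot {ι : Type*} (s : Finset ι) (f : ι → EReal) (h : ∀ i, f i ≠ ⊥) :
    ∑ i ∈ s, f i ≠ ⊥ := by
  classical
  induction s using Finset.induction with
  | empty => simp
  | insert _ _ hns ih => rw [Finset.sum_insert hns]; exact my_add_ne_bot (h _) ih

lemma lsc_sum_ereal {β ι : Type*} [TopologicalSpace β] (s : Finset ι) (f : ι → β → EReal)
    (hf : ∀ i, LowerSemicontinuous (f i)) (hb : ∀ i x, f i x ≠ ⊥) :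
    LowerSemicontinuous (fun x => ∑ i ∈ s, f i x) := by
  classical
  induction s using Finset.induction with
  | empty => simpa using lowerSemicontinuous_const
  | insert _ _ hns ih =>
      simp_rw [Finset.sum_insert hns]
      exact (hf _).add' ih fun x =>
        EReal.continuousAt_add (Or.inr (my_sum_ne_bot _ _ fun i => hb i x)) (Or.inl (hb _ x))

lemma indC_nonneg {E : Type*} (C : Set E) (w : E) : 0 ≤ indC C w := by
  unfold indC; split_ifs <;> simp

lemma indC_ne_bot {E : Type*} (C : Set E) (w : E) : indC C w ≠ ⊥ := by
  unfold indC; split_ifs <;> simp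

lemma lsc_indC {E : Type*} [TopologicalSpace E] {C : Set E} (hC : IsClosed C) :
    LowerSemicontinuous (indC C) := by
  intro x b hb
  by_cases hx : x ∈ C
  · have hfx : indC C x = 0 := by unfold indC; rw [if_pos hx]
    rw [hfx] at hb
    filter_upwards with z using lt_of_lt_of_le hb (indC_nonneg C z)
  · have hfx : indC C x = ⊤ := by unfold indC; rw [if_neg hx]
    rw [hfx] at hb
    filter_upwards [hC.isOpen_compl.eventually_mem hx] with z hz
    have : indC C z = ⊤ := by unfold indC; rw [if_neg hz]
    rw [this]; exact hb

lemma fpois_ne_bot (y t : ℝ) : fpois y t ≠ ⊥ := by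
  unfold fpois; split_ifs <;> first | exact EReal.coe_ne_bot _ | simp

lemma fpois_lb {y : ℝ} (hy : 0 ≤ y) (t : ℝ) :
    ((y - y * Real.log y : ℝ) : EReal) ≤ fpois y t := by
  unfold fpois
  split_ifs with h1 h2 h3
  · rw [EReal.coe_le_coe_iff]
    have hty : 0 < t / y := div_pos h2 h1
    have := Real.log_le_sub_one_of_pos hty
    have hmul : y * Real.log (t / y) ≤ y * (t / y - 1) :=
      mul_le_mul_of_nonneg_left this hy
    rw [Real.log_div h2.ne' h1.ne'] at hmul
    have : y * (t / y - 1) = t - y := by field_simp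
    nlinarith [hmul, this]
  · exact le_top
  · rw [EReal.coe_le_coe_iff]
    have hy0 : y = 0 := le_antisymm (not_lt.1 h1) hy
    simp [hy0, h3]
  · exact le_top

lemma lsc_fpois {y : ℝ} (hy : 0 ≤ y) : LowerSemicontinuous (fpois y) := by
  intro t
  rcases lt_trichotomy t 0 with ht | ht | ht
  · -- t < 0 : fpois is ⊤ on a neighborhood
    intro b hb
    have hft : fpois y t = ⊤ := by unfold fpois; split_ifs <;> first | rfl | linarith
    rw [hft] at hb
    filter_upwards [isOpen_Iio.eventually_mem (show t ∈ Set.Iio (0:ℝ) from ht)] with s hs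
    have : fpois y s = ⊤ := by
      unfold fpois; split_ifs <;> first | rfl | (exfalso; simp at hs; linarith)
    rw [this]; exact hb
  · -- t = 0
    subst ht
    by_cases h1 : 0 < y
    · -- value is ⊤ at 0
      intro b hb
      have hft : fpois y 0 = ⊤ := by unfold fpois; simp [h1]
      rw [hft] at hb
      induction b using EReal.rec with
      | bot =>
          filter_upwards with s using bot_lt_iff_ne_bot.2 (fpois_ne_bot y s)
      | coe r =>
          have hε : (0:ℝ) < Real.exp (-r / y) := Real.exp_pos _
          filter_upwards [isOpen_Iio.eventually_mem
            (show (0:ℝ) ∈ Set.Iio (Real.exp (-r / y)) from hε)] with s hs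
          simp only [Set.mem_Iio] at hs
          unfold fpois
          rw [if_pos h1]
          split_ifs with h2
          · rw [gt_iff_lt, EReal.coe_lt_coe_iff]
            have hlog : Real.log s < -r / y := by
              calc Real.log s < Real.log (Real.exp (-r / y)) :=
                    Real.log_lt_log h2 hs
                _ = -r / y := Real.log_exp _
            have : r < -y * Real.log s := by
              rw [neg_mul, lt_neg]
              calc y * Real.log s < y * (-r / y) := by
                    exact mul_lt_mul_of_pos_left hlog h1
                _ = -r := by field_simp [mul_comm]
            linarith
          · exact EReal.coe_lt_top r
      | top => exact absurd hb (lt_irrefl _)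
    · -- y ≤ 0 : value is 0 at 0, and fpois y s ≥ s
      intro b hb
      have hft : fpois y 0 = 0 := by unfold fpois; simp [h1]
      rw [hft] at hb
      have hcont : ContinuousAt (fun s : ℝ => ((s : ℝ) : EReal)) 0 :=
        continuous_coe_real_ereal.continuousAt
      have hev : ∀ᶠ s in nhds (0:ℝ), ((s : ℝ) : EReal) ∈ Set.Ioi b := by
        apply hcont.eventually_mem (isOpen_Ioi.mem_nhds ?_)
        simpa using hb
      filter_upwards [hev] with s hs
      have hge : ((s : ℝ) : EReal) ≤ fpois y s := by
        unfold fpois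
        rw [if_neg h1]
        split_ifs with h2
        · exact le_refl _
        · exact le_top
      exact lt_of_lt_of_le hs hge
  · -- t > 0 : fpois y is continuous at t
    have hev : ∀ᶠ s in nhds t, fpois y s =
        (if 0 < y then ((-y * Real.log s + s : ℝ) : EReal) else ((s : ℝ) : EReal)) := by
      filter_upwards [isOpen_Ioi.eventually_mem (show t ∈ Set.Ioi (0:ℝ) from ht)] with s hs
      simp only [Set.mem_Ioi] at hs
      unfold fpois
      split_ifs <;> first | rfl | linarith
    have hcont : ContinuousAt (fun s : ℝ =>
        (if 0 < y then ((-y * Real.log s + s : ℝ) : EReal) else ((s : ℝ) : EReal))) t := by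
      split_ifs with h1
      · exact continuous_coe_real_ereal.continuousAt.comp
          (((continuousAt_const.mul (Real.continuousAt_log ht.ne')).add continuousAt_id))
      · exact continuous_coe_real_ereal.continuousAt
    have : ContinuousAt (fpois y) t := hcont.congr (Filter.EventuallyEq.symm hev)
    exact this.lowerSemicontinuousAt

/-- A lower semicontinuous `EReal`-valued function attains its minimum on a
nonempty compact set. -/
lemma lsc_exists_min {β : Type*} [TopologicalSpace β] {s : Set β} (hs : IsCompact s)
    (hne : s.Nonempty) {f : β → EReal} (hf : LowerSemicontinuous f) :
    ∃ x ∈ s, ∀ y ∈ s, f x ≤ f y := by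
  by_contra hcon
  push_neg at hcon
  set m := sInf (f '' s) with hm
  have hmlt : ∀ x ∈ s, m < f x := by
    intro x hx
    obtain ⟨z, hz, hlt⟩ := hcon x hx
    exact lt_of_le_of_lt (sInf_le ⟨z, hz, rfl⟩) hlt
  -- open cover by sets {z | b < f z} for b > m
  have hcover : s ⊆ ⋃ b ∈ Set.Ioi m, {z | b < f z} := by
    intro x hx
    obtain ⟨b, hb1, hb2⟩ := exists_between (hmlt x hx)
    exact Set.mem_biUnion hb1 hb2
  obtain ⟨T, hTsub, hTfin, hTcover⟩ := hs.elim_finite_subcover_image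
    (fun b (_ : b ∈ Set.Ioi m) => hf.isOpen_preimage b) hcover
  obtain ⟨x0, hx0⟩ := hne
  have hTne : T.Nonempty := by
    by_contra hTe
    rw [Set.not_nonempty_iff_eq_empty] at hTe
    have := hTcover hx0
    simp [hTe] at this
  obtain ⟨b0, hb0T, hb0min⟩ := Set.exists_min_image T id hTfin hTne
  have hb0lt : ∀ x ∈ s, b0 < f x := by
    intro x hx
    obtain ⟨b, hbT, hbx⟩ := by simpa using hTcover hx
    exact lt_of_le_of_lt (hb0min b hbT) hbx
  have : b0 ≤ m := le_sInf (by rintro _ ⟨x, hx, rfl⟩; exact (hb0lt x hx).le)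
  exact absurd (lt_of_lt_of_le (hTsub hb0T) this) (lt_irrefl m)

lemma my_coe_sum {ι : Type*} (s : Finset ι) (f : ι → ℝ) :
    ((∑ i ∈ s, f i : ℝ) : EReal) = ∑ i ∈ s, ((f i : ℝ) : EReal) := by
  classical
  induction s using Finset.induction with
  | empty => simp
  | insert _ _ hns ih => rw [Finset.sum_insert hns, Finset.sum_insert hns, EReal.coe_add, ih]

end Aux

/-- If `Ψ` is continuous, nonnegative and coercive, and `J` is proper, then `J` attains
its infimum: there is `α*` with `J(α*) < +∞` and `J(α*) ≤ J(α)` for all `α`. -/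
theorem J_attains_infimum (n L : ℕ) (y : Fin n → ℝ) (hy : ∀ i, 0 ≤ y i)
    (H : EuclideanSpace ℝ (Fin n) →ₗ[ℝ] EuclideanSpace ℝ (Fin n))
    (Φ : EuclideanSpace ℝ (Fin L) →ₗ[ℝ] EuclideanSpace ℝ (Fin n))
    (γ : ℝ) (hγ : 0 < γ) (Ψ : EuclideanSpace ℝ (Fin L) → ℝ)
    (hΨcont : Continuous Ψ) (hΨnn : ∀ α, 0 ≤ Ψ α)
    (hΨcoercive : ∀ M : ℝ, ∃ R : ℝ, ∀ α : EuclideanSpace ℝ (Fin L), R < ‖α‖ → M < Ψ α)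
    (hproper : ∃ α₀ : EuclideanSpace ℝ (Fin L), J y H Φ γ Ψ α₀ < ⊤) :
    ∃ αstar : EuclideanSpace ℝ (Fin L), J y H Φ γ Ψ αstar < ⊤ ∧
      ∀ α : EuclideanSpace ℝ (Fin L), J y H Φ γ Ψ αstar ≤ J y H Φ γ Ψ α := by
  classical
  have hΦcont : Continuous Φ := Φ.continuous_of_finiteDimensional
  have hHΦcont : Continuous (fun α : EuclideanSpace ℝ (Fin L) => H (Φ α)) :=
    H.continuous_of_finiteDimensional.comp hΦcont
  have hproj : ∀ i : Fin n, Continuous (fun x : EuclideanSpace ℝ (Fin n) => x i) :=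
    fun i => (EuclideanSpace.proj i).continuous
  -- lower semicontinuity of f1
  have hterm : ∀ i : Fin n, LowerSemicontinuous (fun η : EuclideanSpace ℝ (Fin n) => fpois (y i) (η i)) :=
    fun i => (lsc_fpois (hy i)).comp (hproj i)
  have hf1lsc : LowerSemicontinuous (fun η : EuclideanSpace ℝ (Fin n) => f1 y η) := by
    unfold f1
    exact lsc_sum_ereal Finset.univ (fun i (η : EuclideanSpace ℝ (Fin n)) => fpois (y i) (η i))
      hterm (fun i x => fpois_ne_bot _ _)
  have hAlsc : LowerSemicontinuous (fun α : EuclideanSpace ℝ (Fin L) => f1 y (H (Φ α))) :=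
    hf1lsc.comp hHΦcont
  have hBlsc : LowerSemicontinuous (fun α : EuclideanSpace ℝ (Fin L) => ((γ * Ψ α : ℝ) : EReal)) := by
    have : Continuous (fun α : EuclideanSpace ℝ (Fin L) => ((γ * Ψ α : ℝ) : EReal)) :=
      continuous_coe_real_ereal.comp (continuous_const.mul hΨcont)
    exact this.lowerSemicontinuous
  have hCclosed : IsClosed {x : EuclideanSpace ℝ (Fin n) | ∀ i, 0 ≤ x i} := by
    have : {x : EuclideanSpace ℝ (Fin n) | ∀ i, 0 ≤ x i} = ⋂ i, {x : EuclideanSpace ℝ (Fin n) | 0 ≤ x i} := by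
      ext x; simp
    rw [this]
    exact isClosed_iInter fun i => isClosed_le continuous_const (hproj i)
  have hClsc : LowerSemicontinuous
      (fun α : EuclideanSpace ℝ (Fin L) => indC {x : EuclideanSpace ℝ (Fin n) | ∀ i, 0 ≤ x i} (Φ α)) :=
    (lsc_indC hCclosed).comp hΦcont
  have hAne : ∀ α : EuclideanSpace ℝ (Fin L), (fun α : EuclideanSpace ℝ (Fin L) => f1 y (H (Φ α))) α ≠ ⊥ := by
    intro α
    exact my_sum_ne_bot _ _ fun i => fpois_ne_bot _ _
  have hJlsc : LowerSemicontinuous (J y H Φ γ Ψ) := by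
    have h1 : LowerSemicontinuous
        (fun α : EuclideanSpace ℝ (Fin L) => f1 y (H (Φ α)) + ((γ * Ψ α : ℝ) : EReal)) :=
      hAlsc.add' hBlsc fun x =>
        EReal.continuousAt_add (Or.inr (EReal.coe_ne_bot _)) (Or.inr (EReal.coe_ne_top _))
    exact h1.add' hClsc fun x =>
      EReal.continuousAt_add (Or.inr (indC_ne_bot _ _))
        (Or.inl (my_add_ne_bot (hAne x) (EReal.coe_ne_bot _)))
  -- uniform lower bound
  set c : ℝ := ∑ i, (y i - y i * Real.log (y i)) with hc
  have hJlb : ∀ α : EuclideanSpace ℝ (Fin L), ((c + γ * Ψ α : ℝ) : EReal) ≤ J y H Φ γ Ψ α := by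
    intro α
    have hA : ((c : ℝ) : EReal) ≤ f1 y (H (Φ α)) := by
      rw [hc, my_coe_sum]
      exact Finset.sum_le_sum fun i _ => fpois_lb (hy i) _
    calc ((c + γ * Ψ α : ℝ) : EReal)
        = ((c : ℝ) : EReal) + ((γ * Ψ α : ℝ) : EReal) := EReal.coe_add _ _
      _ = ((c : ℝ) : EReal) + ((γ * Ψ α : ℝ) : EReal) + 0 := (add_zero _).symm
      _ ≤ J y H Φ γ Ψ α :=
          add_le_add (add_le_add hA le_rfl) (indC_nonneg _ _)
  obtain ⟨α₀, hα₀⟩ := hproper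
  obtain ⟨B, hB1, hB2⟩ := EReal.lt_iff_exists_real_btwn.1 hα₀
  obtain ⟨R, hR⟩ := hΨcoercive ((B - c) / γ)
  have hfar : ∀ α : EuclideanSpace ℝ (Fin L), R < ‖α‖ → (B : EReal) < J y H Φ γ Ψ α := by
    intro α hα
    have h1 : (B - c) / γ < Ψ α := hR α hα
    have h2 : B < c + γ * Ψ α := by
      have := (div_lt_iff₀ hγ).1 h1
      linarith [mul_comm γ (Ψ α) ▸ this]
    exact lt_of_lt_of_le (EReal.coe_lt_coe_iff.2 h2) (hJlb α)
  set R' : ℝ := max R ‖α₀‖ with hR'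
  have hα₀K : α₀ ∈ Metric.closedBall (0 : EuclideanSpace ℝ (Fin L)) R' := by
    rw [Metric.mem_closedBall, dist_zero_right]
    exact le_max_right _ _
  obtain ⟨αs, hαsK, hmin⟩ := lsc_exists_min (isCompact_closedBall (0 : EuclideanSpace ℝ (Fin L)) R')
    ⟨α₀, hα₀K⟩ hJlsc
  refine ⟨αs, ?_, ?_⟩
  · exact lt_of_le_of_lt (hmin α₀ hα₀K) hα₀
  · intro α
    by_cases hαK : α ∈ Metric.closedBall (0 : EuclideanSpace ℝ (Fin L)) R'
    · exact hmin α hαK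
    · have hnorm : R' < ‖α‖ := by
        rw [Metric.mem_closedBall, dist_zero_right, not_le] at hαK
        exact hαK
      have hRlt : R < ‖α‖ := lt_of_le_of_lt (le_max_left _ _) hnorm
      calc J y H Φ γ Ψ αs ≤ J y H Φ γ Ψ α₀ := hmin α₀ hα₀K
        _ ≤ (B : EReal) := hB1.le
        _ ≤ J y H Φ γ Ψ α := (hfar α hRlt).le
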